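/- Let E be a real Banach space, a < b real numbers and τ = b - a. If f : ℝ → E is twice continuously differentiable on [a,b] and θ ∈ [0,1], then ‖(f(b) - f(a))/τ - (θ f'(b) + (1-θ) f'(a))‖ ≤ τ^{1/2} (∫_a^b ‖f''(s)‖² ds)^{1/2}. -/

import Mathlib

open Set intervalIntegral MeasureTheory

/-- L²-type bound for the θ-scheme consistency error:
`‖(f(b) - f(a))/τ - (θ f'(b) + (1-θ) f'(a))‖ ≤ τ^{1/2} (∫_a^b ‖f''(s)‖² ds)^{1/2}`. -/
theorem theta_consistency_L2_bound
    {E : Type*} [NormedAddCommGroup E] [NormedSpace ℝ E] [CompleteSpace E]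
    (a b τ θ : ℝ) (hab : a < b) (hτ : τ = b - a) (hθ : θ ∈ Icc (0 : ℝ) 1)
    (f f' f'' : ℝ → E)
    (hf : ∀ t ∈ Icc a b, HasDerivWithinAt f (f' t) (Icc a b) t)
    (hf' : ∀ t ∈ Icc a b, HasDerivWithinAt f' (f'' t) (Icc a b) t)
    (hf'' : ContinuousOn f'' (Icc a b)) :
    ‖(1 / τ) • (f b - f a) - (θ • f' b + (1 - θ) • f' a)‖
      ≤ τ ^ ((1 : ℝ) / 2) * (∫ s in a..b, ‖f'' s‖ ^ 2) ^ ((1 : ℝ) / 2) := by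
  obtain ⟨hθ0, hθ1⟩ := hθ
  have hab' : a ≤ b := hab.le
  have hτ0 : 0 < τ := by rw [hτ]; linarith
  have hcf' : ContinuousOn f' (Icc a b) := fun t ht => (hf' t ht).continuousWithinAt
  have hcf : ContinuousOn f (Icc a b) := fun t ht => (hf t ht).continuousWithinAt
  -- general FTC on subintervals
  have hFTC : ∀ (g g' : ℝ → E), (∀ t ∈ Icc a b, HasDerivWithinAt g (g' t) (Icc a b) t) →
      ContinuousOn g (Icc a b) → ContinuousOn g' (Icc a b) →
      ∀ c ∈ Icc a b, ∀ d ∈ Icc a b, c ≤ d → ∫ s in c..d, g' s = g d - g c := by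
    intro g g' hg hgc hg'c c hc d hd hcd
    refine integral_eq_sub_of_hasDeriv_right_of_le hcd
      (hgc.mono (Icc_subset_Icc hc.1 hd.2)) (fun x hx => ?_) ?_
    · have hxab : x ∈ Ioo a b := ⟨lt_of_le_of_lt hc.1 hx.1, lt_of_lt_of_le hx.2 hd.2⟩
      exact ((hg x (Ioo_subset_Icc_self hxab)).hasDerivAt
        (Icc_mem_nhds hxab.1 hxab.2)).hasDerivWithinAt
    · exact (hg'c.mono (Icc_subset_Icc hc.1 hd.2)).intervalIntegrable_of_Icc hcd
  set M : ℝ := ∫ u in a..b, ‖f'' u‖ with hM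
  have hf''norm : ContinuousOn (fun u => ‖f'' u‖) (Icc a b) := hf''.norm
  have hf''int : IntervalIntegrable (fun u => ‖f'' u‖) volume a b :=
    hf''norm.intervalIntegrable_of_Icc hab'
  have haI : a ∈ Icc a b := ⟨le_refl a, hab'⟩
  have hbI : b ∈ Icc a b := ⟨hab', le_refl b⟩
  -- pointwise bound on f' deviation
  set c : E := θ • f' b + (1 - θ) • f' a with hc
  have key : ∀ s ∈ Icc a b, ‖f' s - c‖ ≤ M := by
    intro s hs
    have h1 : f' s - f' a = ∫ u in a..s, f'' u :=
      (hFTC f' f'' hf' hcf' hf'' a haI s hs hs.1).symm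
    have h2 : f' b - f' s = ∫ u in s..b, f'' u :=
      (hFTC f' f'' hf' hcf' hf'' s hs b hbI hs.2).symm
    have hdecomp : f' s - c = (1 - θ) • (f' s - f' a) - θ • (f' b - f' s) := by
      rw [hc]; module
    rw [hdecomp, h1, h2]
    have hb1 : ‖∫ u in a..s, f'' u‖ ≤ M := by
      refine le_trans (norm_integral_le_integral_norm hs.1) ?_
      exact integral_mono_interval (le_refl a) hs.1 hs.2
        (Filter.Eventually.of_forall fun u => norm_nonneg _) hf''int
    have hb2 : ‖∫ u in s..b, f'' u‖ ≤ M := by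
      refine le_trans (norm_integral_le_integral_norm hs.2) ?_
      exact integral_mono_interval hs.1 hs.2 (le_refl b)
        (Filter.Eventually.of_forall fun u => norm_nonneg _) hf''int
    calc ‖(1 - θ) • (∫ u in a..s, f'' u) - θ • (∫ u in s..b, f'' u)‖
        ≤ ‖(1 - θ) • (∫ u in a..s, f'' u)‖ + ‖θ • (∫ u in s..b, f'' u)‖ := norm_sub_le _ _
      _ = (1 - θ) * ‖∫ u in a..s, f'' u‖ + θ * ‖∫ u in s..b, f'' u‖ := by
          rw [norm_smul, norm_smul, Real.norm_of_nonneg (by linarith), Real.norm_of_nonneg hθ0]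
      _ ≤ (1 - θ) * M + θ * M := by
          have h1θ : (0:ℝ) ≤ 1 - θ := by linarith
          gcongr
      _ = M := by ring
  -- rewrite LHS
  have hfint : ∫ s in a..b, f' s = f b - f a := hFTC f f' hf hcf hcf' a haI b hbI hab'
  have hrw : (1 / τ) • (f b - f a) - c = (1 / τ) • ∫ s in a..b, (f' s - c) := by
    have hint : IntervalIntegrable f' volume a b := hcf'.intervalIntegrable_of_Icc hab'
    rw [intervalIntegral.integral_sub hint (intervalIntegrable_const), hfint,
      intervalIntegral.integral_const, ← hτ]
    match_scalars <;> (field_simp; try ring)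
  have hLHS : ‖(1 / τ) • (f b - f a) - c‖ ≤ M := by
    rw [hrw, norm_smul, Real.norm_of_nonneg (by positivity)]
    have : ‖∫ s in a..b, (f' s - c)‖ ≤ M * |b - a| := by
      refine intervalIntegral.norm_integral_le_of_norm_le_const fun x hx => ?_
      rw [uIoc_of_le hab'] at hx
      exact key x (Ioc_subset_Icc_self hx)
    calc (1 / τ) * ‖∫ s in a..b, (f' s - c)‖ ≤ (1 / τ) * (M * |b - a|) := by
          gcongr
      _ = M := by rw [abs_of_pos (by linarith : (0:ℝ) < b - a), ← hτ]; field_simp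
  -- Cauchy–Schwarz: M ≤ τ^{1/2} * (∫ ‖f''‖²)^{1/2}
  have hCS : M ≤ τ ^ ((1 : ℝ) / 2) * (∫ s in a..b, ‖f'' s‖ ^ 2) ^ ((1 : ℝ) / 2) := by
    haveI hfin : IsFiniteMeasure (volume.restrict (Ioc a b)) :=
      ⟨by rw [Measure.restrict_apply_univ]; simp [Real.volume_Ioc]⟩
    have hmeas : AEStronglyMeasurable (fun s => ‖f'' s‖) (volume.restrict (Ioc a b)) :=
      (hf''norm.mono Ioc_subset_Icc_self).aestronglyMeasurable measurableSet_Ioc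
    obtain ⟨C, hC⟩ := (isCompact_Icc).exists_bound_of_continuousOn hf''
    have hmem : MemLp (fun s => ‖f'' s‖) (ENNReal.ofReal 2) (volume.restrict (Ioc a b)) := by
      refine MemLp.of_bound hmeas C ?_
      filter_upwards [ae_restrict_mem measurableSet_Ioc] with x hx
      rw [Real.norm_of_nonneg (norm_nonneg _)]
      exact hC x (Ioc_subset_Icc_self hx)
    have hone : MemLp (fun _ : ℝ => (1 : ℝ)) (ENNReal.ofReal 2) (volume.restrict (Ioc a b)) :=
      memLp_const 1
    have hpq : Real.HolderConjugate 2 2 := Real.holderConjugate_iff.mpr ⟨one_lt_two, by norm_num⟩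
    have h := integral_mul_le_Lp_mul_Lq_of_nonneg hpq
      (Filter.Eventually.of_forall fun _ => zero_le_one)
      (Filter.Eventually.of_forall fun x => norm_nonneg (f'' x)) hone hmem
    simp only [one_mul] at h
    have h1 : ∫ (x : ℝ) in Ioc a b, (1 : ℝ) ^ (2 : ℝ) ∂volume = τ := by
      simp [Real.volume_Ioc, hτ, sub_nonneg.mpr hab']
    have h2 : ∫ (x : ℝ) in Ioc a b, ‖f'' x‖ ^ (2 : ℝ) ∂volume
        = ∫ s in a..b, ‖f'' s‖ ^ 2 := by
      rw [intervalIntegral.integral_of_le hab']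
      refine integral_congr_ae (Filter.Eventually.of_forall fun x => ?_)
      simp [Real.rpow_two]
    rw [h1, h2] at h
    rw [hM, intervalIntegral.integral_of_le hab']
    exact h
  exact hLHS.trans hCS
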